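/- Let g₁₉⁻ be the Lie algebra with complex structure equations dω¹ = 0, dω² = ω^{13} + ω^{1 3̄}, dω³ = i(ω^{1 2̄} − ω^{2 1̄}) (Family III with ε = 0, sign +). Then the Bott-Chern cohomology group H^{1,1}_BC(g₁₉⁻) is 2-dimensional, spanned by the classes of ω^{1 1̄} and ω^{1 2̄} − ω^{2 1̄}. -/

import Mathlib

noncomputable section

open Submodule LinearMap

abbrev E : Type := ExteriorAlgebra ℂ (Fin 6 → ℂ)

def ω (i : Fin 3) : E := ExteriorAlgebra.ι ℂ (Pi.single (⟨i.1, by omega⟩ : Fin 6) (1 : ℂ))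
def ωb (i : Fin 3) : E := ExteriorAlgebra.ι ℂ (Pi.single (⟨i.1 + 3, by omega⟩ : Fin 6) (1 : ℂ))

def IsAntider (d : E →ₗ[ℂ] E) : Prop :=
  d 1 = 0 ∧ ∀ (v : Fin 6 → ℂ) (y : E),
    d (ExteriorAlgebra.ι ℂ v * y) =
      d (ExteriorAlgebra.ι ℂ v) * y - ExteriorAlgebra.ι ℂ v * d y

def Lam11 : Submodule ℂ E := span ℂ (Set.range fun p : Fin 3 × Fin 3 => ω p.1 * ωb p.2)

-- auxiliary machinery
def e (i : Fin 6) : E := ExteriorAlgebra.ι ℂ (Pi.single i 1)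

def detF (n : ℕ) (s : Fin n → Fin 6) : (Fin 6 → ℂ) [⋀^Fin n]→ₗ[ℂ] ℂ :=
  Matrix.detRowAlternating.compLinearMap (LinearMap.funLeft ℂ ℂ s)

def φ (n : ℕ) (s : Fin n → Fin 6) : E →ₗ[ℂ] ℂ :=
  ExteriorAlgebra.liftAlternating
    (Function.update (fun i => (0 : (Fin 6 → ℂ) [⋀^Fin i]→ₗ[ℂ] ℂ)) n (detF n s))

theorem phi3 (s : Fin 3 → Fin 6) (i j k : Fin 6) :
    φ 3 s (e i * (e j * e k)) =
      Matrix.det (Matrix.of fun r c =>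
        (![Pi.single i 1, Pi.single j 1, Pi.single k 1] : Fin 3 → Fin 6 → ℂ) r (s c)) := by
  have h : e i * (e j * e k) =
      ExteriorAlgebra.ιMulti ℂ 3 ![Pi.single i 1, Pi.single j 1, Pi.single k 1] := by
    simp [ExteriorAlgebra.ιMulti_apply, e, List.ofFn_succ, mul_assoc]
  rw [h, φ, ExteriorAlgebra.liftAlternating_apply_ιMulti, Function.update_self]
  rfl

theorem phi2 (s : Fin 2 → Fin 6) (i j : Fin 6) :
    φ 2 s (e i * e j) =
      Matrix.det (Matrix.of fun r c =>
        (![Pi.single i 1, Pi.single j 1] : Fin 2 → Fin 6 → ℂ) r (s c)) := by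
  have h : e i * e j = ExteriorAlgebra.ιMulti ℂ 2 ![Pi.single i 1, Pi.single j 1] := by
    simp [ExteriorAlgebra.ιMulti_apply, e, List.ofFn_succ, mul_assoc]
  rw [h, φ, ExteriorAlgebra.liftAlternating_apply_ιMulti, Function.update_self]
  rfl

theorem we0 : ω 0 = e 0 := rfl
theorem we1 : ω 1 = e 1 := rfl
theorem we2 : ω 2 = e 2 := rfl
theorem wbe0 : ωb 0 = e 3 := rfl
theorem wbe1 : ωb 1 = e 4 := rfl
theorem wbe2 : ωb 2 = e 5 := rfl

theorem eswap (i j : Fin 6) : e i * e j = -(e j * e i) := by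
  rw [eq_neg_iff_add_eq_zero]; exact ExteriorAlgebra.ι_add_mul_swap _ _

set_option maxHeartbeats 2000000 in
theorem bott_chern_11_h19minus
    (d : E →ₗ[ℂ] E) (hd : IsAntider d)
    (h1 : d (ω 0) = 0)
    (h2 : d (ω 1) = ω 0 * ω 2 + ω 0 * ωb 2)
    (h3 : d (ω 2) = Complex.I • (ω 0 * ωb 1) - Complex.I • (ω 1 * ωb 0))
    (h1c : d (ωb 0) = 0)
    (h2c : d (ωb 1) = ωb 0 * ωb 2 + ωb 0 * ω 2)
    (h3c : d (ωb 2) = -(Complex.I) • (ωb 0 * ω 1) + Complex.I • (ωb 1 * ω 0)) :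
    Lam11 ⊓ ker d = span ℂ {ω 0 * ωb 0, ω 0 * ωb 1 - ω 1 * ωb 0} ∧
      Module.finrank ℂ ↥(Lam11 ⊓ ker d) = 2 := by
  have hrule : ∀ i j, d (ω i * ωb j) = d (ω i) * ωb j - ω i * d (ωb j) :=
    fun i j => hd.2 _ _
  -- d of the two claimed generators is 0
  have dk1 : d (ω 0 * ωb 0) = 0 := by rw [hrule, h1, h1c]; simp
  have dk2 : d (ω 0 * ωb 1 - ω 1 * ωb 0) = 0 := by
    rw [map_sub, hrule, hrule, h1, h2, h1c, h2c]
    rw [we0, we1, we2, wbe0, wbe1, wbe2]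
    have s1 : e 2 * e 3 = -(e 3 * e 2) := eswap _ _
    have s2 : e 5 * e 3 = -(e 3 * e 5) := eswap _ _
    simp only [zero_mul, mul_zero, mul_add, add_mul, mul_assoc, s1, s2, mul_neg, zero_sub,
      sub_zero]
    abel
  -- membership of generators
  have mem1 : ω 0 * ωb 0 ∈ Lam11 ⊓ ker d := by
    refine ⟨subset_span ⟨(0, 0), rfl⟩, ?_⟩
    simpa [LinearMap.mem_ker] using dk1
  have mem2 : ω 0 * ωb 1 - ω 1 * ωb 0 ∈ Lam11 ⊓ ker d := by
    refine ⟨sub_mem (subset_span ⟨(0, 1), rfl⟩) (subset_span ⟨(1, 0), rfl⟩), ?_⟩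
    simpa [LinearMap.mem_ker] using dk2
  have hEq : Lam11 ⊓ ker d = span ℂ {ω 0 * ωb 0, ω 0 * ωb 1 - ω 1 * ωb 0} := by
    apply le_antisymm
    · rintro x ⟨hx1, hx2⟩
      obtain ⟨a, hx⟩ := (mem_span_range_iff_exists_fun ℂ).1 hx1
      have hdx : (∑ p : Fin 3 × Fin 3, a p • d (ω p.1 * ωb p.2)) = 0 := by
        have h0 : d x = 0 := hx2
        calc (∑ p : Fin 3 × Fin 3, a p • d (ω p.1 * ωb p.2))
            = d (∑ p : Fin 3 × Fin 3, a p • (ω p.1 * ωb p.2)) := by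
              rw [map_sum]; simp [map_smul]
          _ = 0 := by rw [hx]; exact h0
      have key : ∀ s : Fin 3 → Fin 6,
          (∑ p : Fin 3 × Fin 3, a p * φ 3 s (d (ω p.1 * ωb p.2))) = 0 := by
        intro s
        have h := congrArg (φ 3 s) hdx
        simpa [map_sum, map_smul, smul_eq_mul] using h
      have hd00 : d (ω 0 * ωb 0) = 0 := dk1
      have hd01 : d (ω 0 * ωb 1) = -(e 0 * (e 3 * e 5)) - e 0 * (e 3 * e 2) := by
        rw [hrule, h1, h2c, we0, wbe0, wbe2, we2]
        simp only [zero_mul, mul_zero, add_mul, mul_add, sub_mul, mul_sub, mul_neg, neg_mul,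
          mul_smul_comm, smul_mul_assoc, mul_assoc, neg_smul, zero_sub, sub_zero, neg_neg]
        all_goals module
      have hd02 : d (ω 0 * ωb 2) =
          Complex.I • (e 0 * (e 3 * e 1)) - Complex.I • (e 0 * (e 4 * e 0)) := by
        rw [hrule, h1, h3c, wbe0, wbe1, we0, we1]
        simp only [zero_mul, mul_zero, add_mul, mul_add, sub_mul, mul_sub, mul_neg, neg_mul,
          mul_smul_comm, smul_mul_assoc, mul_assoc, neg_smul, zero_sub, sub_zero, neg_neg]
        all_goals module
      have hd10 : d (ω 1 * ωb 0) = e 0 * (e 2 * e 3) + e 0 * (e 5 * e 3) := by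
        rw [hrule, h2, h1c, we0, we2, wbe0, wbe2]
        simp only [zero_mul, mul_zero, add_mul, mul_add, sub_mul, mul_sub, mul_neg, neg_mul,
          mul_smul_comm, smul_mul_assoc, mul_assoc, neg_smul, zero_sub, sub_zero, neg_neg]
        all_goals module
      have hd11 : d (ω 1 * ωb 1) = e 0 * (e 2 * e 4) + e 0 * (e 5 * e 4)
          - (e 1 * (e 3 * e 5) + e 1 * (e 3 * e 2)) := by
        rw [hrule, h2, h2c, we0, we1, we2, wbe0, wbe1, wbe2]
        simp only [zero_mul, mul_zero, add_mul, mul_add, sub_mul, mul_sub, mul_neg, neg_mul,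
          mul_smul_comm, smul_mul_assoc, mul_assoc, neg_smul, zero_sub, sub_zero, neg_neg]
        all_goals module
      have hd12 : d (ω 1 * ωb 2) = e 0 * (e 2 * e 5) + e 0 * (e 5 * e 5)
          + (Complex.I • (e 1 * (e 3 * e 1)) - Complex.I • (e 1 * (e 4 * e 0))) := by
        rw [hrule, h2, h3c, we0, we1, we2, wbe0, wbe1, wbe2]
        simp only [zero_mul, mul_zero, add_mul, mul_add, sub_mul, mul_sub, mul_neg, neg_mul,
          mul_smul_comm, smul_mul_assoc, mul_assoc, neg_smul, zero_sub, sub_zero, neg_neg]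
        all_goals module
      have hd20 : d (ω 2 * ωb 0) =
          Complex.I • (e 0 * (e 4 * e 3)) - Complex.I • (e 1 * (e 3 * e 3)) := by
        rw [hrule, h3, h1c, we0, we1, wbe0, wbe1]
        simp only [zero_mul, mul_zero, add_mul, mul_add, sub_mul, mul_sub, mul_neg, neg_mul,
          mul_smul_comm, smul_mul_assoc, mul_assoc, neg_smul, zero_sub, sub_zero, neg_neg]
        all_goals module
      have hd21 : d (ω 2 * ωb 1) = Complex.I • (e 0 * (e 4 * e 4))
          - Complex.I • (e 1 * (e 3 * e 4)) - (e 2 * (e 3 * e 5) + e 2 * (e 3 * e 2)) := by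
        rw [hrule, h3, h2c, we0, we1, we2, wbe0, wbe1, wbe2]
        simp only [zero_mul, mul_zero, add_mul, mul_add, sub_mul, mul_sub, mul_neg, neg_mul,
          mul_smul_comm, smul_mul_assoc, mul_assoc, neg_smul, zero_sub, sub_zero, neg_neg]
        all_goals module
      have hd22 : d (ω 2 * ωb 2) = Complex.I • (e 0 * (e 4 * e 5))
          - Complex.I • (e 1 * (e 3 * e 5))
          + (Complex.I • (e 2 * (e 3 * e 1)) - Complex.I • (e 2 * (e 4 * e 0))) := by
        rw [hrule, h3, h3c, we0, we1, we2, wbe0, wbe1, wbe2]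
        simp only [zero_mul, mul_zero, add_mul, mul_add, sub_mul, mul_sub, mul_neg, neg_mul,
          mul_smul_comm, smul_mul_assoc, mul_assoc, neg_smul, zero_sub, sub_zero, neg_neg]
        all_goals module
      have E1 := key ![0, 1, 3]
      simp only [Fintype.sum_prod_type, Fin.sum_univ_three, hd00, hd01, hd02, hd10, hd11,
        hd12, hd20, hd21, hd22, map_add, map_sub, map_smul, map_neg, map_zero, phi3,
        smul_eq_mul] at E1
      simp (config := { decide := true }) [Matrix.det_fin_three, Pi.single_apply,
        Matrix.vecHead, Matrix.vecTail] at E1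
      have E2 := key ![0, 2, 3]
      simp only [Fintype.sum_prod_type, Fin.sum_univ_three, hd00, hd01, hd02, hd10, hd11,
        hd12, hd20, hd21, hd22, map_add, map_sub, map_smul, map_neg, map_zero, phi3,
        smul_eq_mul] at E2
      simp (config := { decide := true }) [Matrix.det_fin_three, Pi.single_apply,
        Matrix.vecHead, Matrix.vecTail] at E2
      have E3 := key ![0, 2, 4]
      simp only [Fintype.sum_prod_type, Fin.sum_univ_three, hd00, hd01, hd02, hd10, hd11,
        hd12, hd20, hd21, hd22, map_add, map_sub, map_smul, map_neg, map_zero, phi3,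
        smul_eq_mul] at E3
      simp (config := { decide := true }) [Matrix.det_fin_three, Pi.single_apply,
        Matrix.vecHead, Matrix.vecTail] at E3
      have E4 := key ![1, 2, 3]
      simp only [Fintype.sum_prod_type, Fin.sum_univ_three, hd00, hd01, hd02, hd10, hd11,
        hd12, hd20, hd21, hd22, map_add, map_sub, map_smul, map_neg, map_zero, phi3,
        smul_eq_mul] at E4
      simp (config := { decide := true }) [Matrix.det_fin_three, Pi.single_apply,
        Matrix.vecHead, Matrix.vecTail] at E4
      have E5 := key ![0, 2, 5]
      simp only [Fintype.sum_prod_type, Fin.sum_univ_three, hd00, hd01, hd02, hd10, hd11,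
        hd12, hd20, hd21, hd22, map_add, map_sub, map_smul, map_neg, map_zero, phi3,
        smul_eq_mul] at E5
      simp (config := { decide := true }) [Matrix.det_fin_three, Pi.single_apply,
        Matrix.vecHead, Matrix.vecTail] at E5
      have E6 := key ![0, 3, 4]
      simp only [Fintype.sum_prod_type, Fin.sum_univ_three, hd00, hd01, hd02, hd10, hd11,
        hd12, hd20, hd21, hd22, map_add, map_sub, map_smul, map_neg, map_zero, phi3,
        smul_eq_mul] at E6
      simp (config := { decide := true }) [Matrix.det_fin_three, Pi.single_apply,
        Matrix.vecHead, Matrix.vecTail] at E6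
      have E7 := key ![1, 3, 4]
      simp only [Fintype.sum_prod_type, Fin.sum_univ_three, hd00, hd01, hd02, hd10, hd11,
        hd12, hd20, hd21, hd22, map_add, map_sub, map_smul, map_neg, map_zero, phi3,
        smul_eq_mul] at E7
      simp (config := { decide := true }) [Matrix.det_fin_three, Pi.single_apply,
        Matrix.vecHead, Matrix.vecTail] at E7
      -- derive the coefficient constraints
      have ha11 : a (1, 1) = 0 := by linear_combination (E3 + E4) / 2
      have hI : a (2, 2) * Complex.I = 0 := by linear_combination (E4 - E3) / 2
      have ha22 : a (2, 2) = 0 := by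
        rcases mul_eq_zero.1 hI with h | h
        · exact h
        · exact absurd h Complex.I_ne_zero
      have ha10 : a (1, 0) = -a (0, 1) := by linear_combination E2
      apply Submodule.mem_span_pair.2
      refine ⟨a (0, 0), a (0, 1), ?_⟩
      rw [← hx]
      simp only [Fintype.sum_prod_type, Fin.sum_univ_three, E1, E5, E6, E7, ha11, ha22,
        ha10, zero_smul, add_zero, zero_add, neg_smul]
      module
    · rw [span_le]
      rintro y hy
      rcases hy with rfl | rfl
      · exact mem1
      · exact mem2
  refine ⟨hEq, ?_⟩
  rw [hEq]
  have hr : ({ω 0 * ωb 0, ω 0 * ωb 1 - ω 1 * ωb 0} : Set E) =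
      Set.range ![ω 0 * ωb 0, ω 0 * ωb 1 - ω 1 * ωb 0] := by
    simp [Matrix.range_cons, Matrix.range_empty, Set.pair_comm]
  rw [hr]
  have hv1 : φ 2 ![0, 4] (ω 0 * ωb 1 - ω 1 * ωb 0) = 1 := by
    rw [we0, we1, wbe0, wbe1, map_sub, phi2, phi2]
    simp (config := { decide := true }) [Matrix.det_fin_two, Pi.single_apply,
      Matrix.vecHead, Matrix.vecTail]
  have hv2 : φ 2 ![0, 4] (ω 0 * ωb 0) = 0 := by
    rw [we0, wbe0, phi2]
    simp (config := { decide := true }) [Matrix.det_fin_two, Pi.single_apply,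
      Matrix.vecHead, Matrix.vecTail]
  have hv3 : φ 2 ![0, 3] (ω 0 * ωb 0) = 1 := by
    rw [we0, wbe0, phi2]
    simp (config := { decide := true }) [Matrix.det_fin_two, Pi.single_apply,
      Matrix.vecHead, Matrix.vecTail]
  have hli : LinearIndependent ℂ ![ω 0 * ωb 0, ω 0 * ωb 1 - ω 1 * ωb 0] := by
    rw [linearIndependent_fin2]
    constructor
    · intro h0
      simp only [Matrix.cons_val_one, Matrix.head_cons, Matrix.cons_val_zero] at h0
      have := congrArg (φ 2 ![0, 4]) h0
      rw [hv1, map_zero] at this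
      simp at this
    · intro c hc
      simp only [Matrix.cons_val_one, Matrix.head_cons, Matrix.cons_val_zero] at hc
      have h4 := congrArg (φ 2 ![0, 4]) hc
      rw [map_smul, hv1, hv2, smul_eq_mul, mul_one] at h4
      have h3 := congrArg (φ 2 ![0, 3]) hc
      rw [map_smul, h4, zero_smul, hv3] at h3
      simp at h3
  have := finrank_span_eq_card (R := ℂ) hli
  simpa using this

end
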